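/- Let G be a connected pseudograph with loops and let G_m be its loop-free version, obtained by replacing the set of loops at each node v by a bundle of edges between v and a new ghost node v'. Then the map φ replacing each loop in a tube by its associated edge is an injective poset map from tubings of G to tubings of G_m, and a tubing of G_m is in the image of φ if and only if it contains no singleton tube at a ghost node. -/

import Mathlib

/-- A pseudograph: finite-or-infinite multigraph with loops allowed,
    given by an endpoint map from edges to unordered pairs of vertices. -/
structure Pseudograph (V E : Type) where
  ends : E → Sym2 V

/-- A (not necessarily well-formed) subgraph datum: a set of vertices and a set of edges. -/
structure Piece (V E : Type) where
  verts : Set V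
  edges : Set E

/-- Containment of subgraph data. -/
def Piece.Sub {V E : Type} (H K : Piece V E) : Prop :=
  H.verts ⊆ K.verts ∧ H.edges ⊆ K.edges

namespace Pseudograph

variable {V E : Type}

/-- The whole graph, as a piece. -/
def wholePiece : Piece V E := ⟨Set.univ, Set.univ⟩

/-- Adjacency using only edges of the piece `H`. -/
def adjIn (G : Pseudograph V E) (H : Piece V E) (u w : V) : Prop :=
  ∃ e ∈ H.edges, G.ends e = s(u, w)

/-- The piece `H` is connected: nonempty vertex set, all vertices joined by walks in `H`. -/
def ConnectedPiece (G : Pseudograph V E) (H : Piece V E) : Prop :=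
  H.verts.Nonempty ∧
    ∀ u ∈ H.verts, ∀ w ∈ H.verts, Relation.ReflTransGen (G.adjIn H) u w

/-- A tube: a proper connected subgraph containing at least one edge between
    every pair of its nodes whenever `G` has such an edge. -/
def IsTube (G : Pseudograph V E) (H : Piece V E) : Prop :=
  (∀ e ∈ H.edges, ∀ v, v ∈ G.ends e → v ∈ H.verts) ∧
  G.ConnectedPiece H ∧
  H ≠ wholePiece ∧
  (∀ u ∈ H.verts, ∀ w ∈ H.verts, u ≠ w → (∃ e, G.ends e = s(u, w)) →
    ∃ e ∈ H.edges, G.ends e = s(u, w))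

/-- Compatibility of tubes: one properly contains the other, or they are disjoint
    and cannot be connected by a single edge of `G`. -/
def Compatible (G : Pseudograph V E) (H K : Piece V E) : Prop :=
  (H.Sub K ∧ H ≠ K) ∨ (K.Sub H ∧ K ≠ H) ∨
  (Disjoint H.verts K.verts ∧
    ¬ ∃ e, ∃ u ∈ H.verts, ∃ w ∈ K.verts, G.ends e = s(u, w))

/-- Adjacency in the whole graph. -/
def adj (G : Pseudograph V E) (u w : V) : Prop := ∃ e, G.ends e = s(u, w)

/-- The connected component of `v`, as a piece. -/
def compPiece (G : Pseudograph V E) (v : V) : Piece V E :=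
  ⟨{u | Relation.ReflTransGen G.adj v u},
   {e | ∀ u, u ∈ G.ends e → Relation.ReflTransGen G.adj v u}⟩

/-- A tubing: a set of pairwise compatible tubes not containing all component tubes. -/
def IsTubing (G : Pseudograph V E) (𝒯 : Set (Piece V E)) : Prop :=
  (∀ H ∈ 𝒯, G.IsTube H) ∧
  (∀ H ∈ 𝒯, ∀ K ∈ 𝒯, H ≠ K → G.Compatible H K) ∧
  ¬ ∀ v : V, G.compPiece v ∈ 𝒯

/-- The poset of tubings of `G`, ordered by reverse inclusion. -/
def Tubing (G : Pseudograph V E) := {𝒯 : Set (Piece V E) // G.IsTubing 𝒯}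

instance (G : Pseudograph V E) : PartialOrder (G.Tubing) where
  le T T' := T'.1 ⊆ T.1
  le_refl T := subset_rfl
  le_trans T₁ T₂ T₃ h h' := fun x hx => h (h' hx)
  le_antisymm T₁ T₂ h h' := Subtype.ext (subset_antisymm h' h)

end Pseudograph

namespace Pseudograph

variable {V E : Type}


/-- `G` is a connected pseudograph. -/
def ConnectedGraph (G : Pseudograph V E) : Prop :=
  Nonempty V ∧ ∀ u w : V, Relation.ReflTransGen G.adj u w

/-- `G` has a loop at `v`. -/
def IsLoopAt (G : Pseudograph V E) (v : V) : Prop := ∃ e, G.ends e = s(v, v)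

open scoped Classical in
/-- The loop-free version `G_m` of `G`: each node `v` with loops gets a ghost node `v'`,
and each loop at `v` becomes an edge between `v` and `v'`. -/
noncomputable def loopFree (G : Pseudograph V E) :
    Pseudograph (V ⊕ {v : V // G.IsLoopAt v}) E :=
  ⟨fun e =>
    if h : ∃ v, G.ends e = s(v, v)
    then s(Sum.inl h.choose, Sum.inr ⟨h.choose, ⟨e, h.choose_spec⟩⟩)
    else (G.ends e).map Sum.inl⟩

/-- The singleton tube at a ghost node. -/
def ghostPiece (G : Pseudograph V E) (v : {v : V // G.IsLoopAt v}) :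
    Piece (V ⊕ {v : V // G.IsLoopAt v}) E :=
  ⟨{Sum.inr v}, ∅⟩

/-- The map `φ` on tubes: loops are replaced by their associated ghost edges, and the
ghost node is added whenever some loop at its node belongs to the tube. -/
def phiPiece (G : Pseudograph V E) (H : Piece V E) :
    Piece (V ⊕ {v : V // G.IsLoopAt v}) E :=
  ⟨Sum.inl '' H.verts ∪
     {w | ∃ v, ∃ h : G.IsLoopAt v, w = Sum.inr ⟨v, h⟩ ∧ ∃ e ∈ H.edges, G.ends e = s(v, v)},
   H.edges⟩

section LoopFreeAux

/-- Extensionality for pieces. -/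
lemma Piece.ext' {H K : Piece V E} (hv : H.verts = K.verts) (he : H.edges = K.edges) :
    H = K := by cases H; cases K; simp_all

lemma sym2_exists_mem {α : Type*} (z : Sym2 α) : ∃ a, a ∈ z := by
  induction z using Sym2.ind with
  | _ x y => exact ⟨x, Sym2.mem_mk_left x y⟩

lemma sym2_diag_eq {α : Type*} {a b c : α} (h : s(a, a) = s(b, c)) : a = b ∧ a = c := by
  rcases Sym2.eq_iff.mp h with ⟨h1, h2⟩ | ⟨h1, h2⟩
  exacts [⟨h1, h2⟩, ⟨h2, h1⟩]

variable {G : Pseudograph V E}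

/-- The inverse map `ψ` on pieces of `G_m`. -/
def _root_.Pseudograph.psiPiece (G : Pseudograph V E) (K : Piece (V ⊕ {v : V // G.IsLoopAt v}) E) :
    Piece V E :=
  ⟨{v | Sum.inl v ∈ K.verts}, K.edges⟩

lemma loopFree_ends_cases (G : Pseudograph V E) (e : E) :
    (∃ v, ∃ hv : G.IsLoopAt v, G.ends e = s(v, v) ∧
      (G.loopFree).ends e = s(Sum.inl v, Sum.inr ⟨v, hv⟩)) ∨
    ((¬ ∃ v, G.ends e = s(v, v)) ∧ (G.loopFree).ends e = (G.ends e).map Sum.inl) := by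
  classical
  have hrfl : (G.loopFree).ends e =
      if h : ∃ v, G.ends e = s(v, v)
      then s(Sum.inl h.choose, Sum.inr ⟨h.choose, ⟨e, h.choose_spec⟩⟩)
      else (G.ends e).map Sum.inl := by
    simp only [loopFree]
  by_cases h : ∃ v, G.ends e = s(v, v)
  · exact Or.inl ⟨h.choose, ⟨e, h.choose_spec⟩, h.choose_spec, by rw [hrfl, dif_pos h]⟩
  · exact Or.inr ⟨h, by rw [hrfl, dif_neg h]⟩

lemma ends_of_loop {e : E} {v : V} (h : G.ends e = s(v, v)) (hv : G.IsLoopAt v) :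
    (G.loopFree).ends e = s(Sum.inl v, Sum.inr ⟨v, hv⟩) := by
  rcases loopFree_ends_cases G e with ⟨w, hw, hew, hlf⟩ | ⟨hn, _⟩
  · have hwv : w = v := (sym2_diag_eq (hew.symm.trans h)).1
    subst hwv
    exact hlf
  · exact absurd ⟨v, h⟩ hn

lemma ends_of_nonloop {e : E} (h : ¬ ∃ v, G.ends e = s(v, v)) :
    (G.loopFree).ends e = (G.ends e).map Sum.inl := by
  rcases loopFree_ends_cases G e with ⟨w, hw, hew, _⟩ | ⟨_, hlf⟩
  · exact absurd ⟨w, hew⟩ h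
  · exact hlf

lemma map_inl_eq_decode {z : Sym2 V} {a b : V ⊕ {v : V // G.IsLoopAt v}}
    (h : z.map Sum.inl = s(a, b)) :
    ∃ p q, a = Sum.inl p ∧ b = Sum.inl q ∧ z = s(p, q) := by
  have ha : a ∈ z.map Sum.inl := h ▸ Sym2.mem_mk_left a b
  have hb : b ∈ z.map Sum.inl := h ▸ Sym2.mem_mk_right a b
  obtain ⟨p, _, hp⟩ := Sym2.mem_map.mp ha
  obtain ⟨q, _, hq⟩ := Sym2.mem_map.mp hb
  refine ⟨p, q, hp.symm, hq.symm,
    Sym2.map.injective (f := (Sum.inl : V → V ⊕ {v : V // G.IsLoopAt v}))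
      Sum.inl_injective ?_⟩
  rw [h, Sym2.map_pair_eq, hp, hq]

lemma phi_verts_inl {H : Piece V E} {v : V} :
    Sum.inl v ∈ (G.phiPiece H).verts ↔ v ∈ H.verts := by
  constructor
  · rintro (⟨u, hu, heq⟩ | ⟨w, hw, heq, -⟩)
    · rwa [← Sum.inl_injective heq]
    · exact absurd heq (by simp)
  · intro hv
    exact Or.inl ⟨v, hv, rfl⟩

lemma phi_verts_inr {H : Piece V E} {v : V} {hv : G.IsLoopAt v} :
    Sum.inr ⟨v, hv⟩ ∈ (G.phiPiece H).verts ↔ ∃ e ∈ H.edges, G.ends e = s(v, v) := by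
  constructor
  · rintro (⟨u, _, heq⟩ | ⟨w, hw, heq, he⟩)
    · exact absurd heq (by simp)
    · have hvw : v = w := congrArg (Sum.elim id Subtype.val) heq
      subst hvw
      exact he
  · intro h
    exact Or.inr ⟨v, hv, rfl, h⟩

lemma phi_injective : Function.Injective G.phiPiece := by
  intro H K h
  refine Piece.ext' ?_ ?_
  · ext v
    rw [← phi_verts_inl (G := G) (H := H), ← phi_verts_inl (G := G) (H := K), h]
  · have : (G.phiPiece H).edges = (G.phiPiece K).edges := by rw [h]
    exact this

lemma phi_eq_whole {H : Piece V E} (h : G.phiPiece H = wholePiece) : H = wholePiece := by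
  refine Piece.ext' ?_ ?_
  · ext v
    simp only [wholePiece, Set.mem_univ, iff_true]
    have : Sum.inl v ∈ (G.phiPiece H).verts := by rw [h]; trivial
    exact phi_verts_inl.mp this
  · have : (G.phiPiece H).edges = Set.univ := by rw [h]; rfl
    exact this

lemma rtg_of_steps {α β : Type*} {r : α → α → Prop} {s : β → β → Prop} {f : β → α}
    (h : ∀ a b, s a b → f a = f b ∨ r (f a) (f b)) :
    ∀ {a b : β}, Relation.ReflTransGen s a b → Relation.ReflTransGen r (f a) (f b) := by
  intro a b hab
  induction hab with
  | refl => exact .refl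
  | tail _ hbc ih =>
    rcases h _ _ hbc with heq | hr
    · exact heq ▸ ih
    · exact ih.tail hr

lemma adjIn_symm {G' : Pseudograph V E} {H : Piece V E} {u w : V}
    (h : G'.adjIn H u w) : G'.adjIn H w u := by
  obtain ⟨e, he, hends⟩ := h
  exact ⟨e, he, by rw [hends, Sym2.eq_swap]⟩

lemma rtg_symm {α : Type*} {r : α → α → Prop} (hs : ∀ a b, r a b → r b a)
    {a b : α} (h : Relation.ReflTransGen r a b) : Relation.ReflTransGen r b a := by
  induction h with
  | refl => exact .refl
  | tail _ hbc ih => exact (Relation.ReflTransGen.single (hs _ _ hbc)).trans ih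

/-- Lifting walks from `G` to `G_m`. -/
lemma lift_walk {H : Piece V E} {u w : V}
    (h : Relation.ReflTransGen (G.adjIn H) u w) :
    Relation.ReflTransGen ((G.loopFree).adjIn (G.phiPiece H)) (Sum.inl u) (Sum.inl w) := by
  refine rtg_of_steps (f := Sum.inl) ?_ h
  rintro a b ⟨e, he, hends⟩
  rcases loopFree_ends_cases G e with ⟨x, hx, hex, hlf⟩ | ⟨hn, hlf⟩
  · obtain ⟨h1, h2⟩ := sym2_diag_eq (hex.symm.trans hends)
    exact Or.inl (by rw [← h1, ← h2])
  · refine Or.inr ⟨e, he, ?_⟩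
    rw [hlf, hends, Sym2.map_pair_eq]

/-- Projecting walks from `G_m` to `G`. -/
lemma proj_walk {K : Piece (V ⊕ {v : V // G.IsLoopAt v}) E}
    {a b : V ⊕ {v : V // G.IsLoopAt v}}
    (h : Relation.ReflTransGen ((G.loopFree).adjIn K) a b) :
    Relation.ReflTransGen (G.adjIn (G.psiPiece K))
      (Sum.elim id Subtype.val a) (Sum.elim id Subtype.val b) := by
  refine rtg_of_steps (f := Sum.elim id Subtype.val) ?_ h
  rintro x y ⟨e, he, hends⟩
  rcases loopFree_ends_cases G e with ⟨v, hv, hev, hlf⟩ | ⟨hn, hlf⟩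
  · left
    rcases Sym2.eq_iff.mp (hlf.symm.trans hends) with ⟨h1, h2⟩ | ⟨h1, h2⟩ <;>
      rw [← h1, ← h2] <;> rfl
  · obtain ⟨p, q, rfl, rfl, hz⟩ := map_inl_eq_decode (hlf.symm.trans hends)
    exact Or.inr ⟨e, he, hz⟩

/-- `G_m` is connected if `G` is. -/
lemma loopFree_connected (hG : G.ConnectedGraph) :
    ∀ a b, Relation.ReflTransGen (G.loopFree).adj a b := by
  have hadj_symm : ∀ a b, (G.loopFree).adj a b → (G.loopFree).adj b a := by
    rintro a b ⟨e, hends⟩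
    exact ⟨e, by rw [hends, Sym2.eq_swap]⟩
  have hinl : ∀ u w : V, Relation.ReflTransGen (G.loopFree).adj (Sum.inl u) (Sum.inl w) := by
    intro u w
    refine rtg_of_steps (f := Sum.inl) ?_ (hG.2 u w)
    rintro a b ⟨e, hends⟩
    rcases loopFree_ends_cases G e with ⟨x, hx, hex, hlf⟩ | ⟨hn, hlf⟩
    · obtain ⟨h1, h2⟩ := sym2_diag_eq (hex.symm.trans hends)
      exact Or.inl (by rw [← h1, ← h2])
    · exact Or.inr ⟨e, by rw [hlf, hends, Sym2.map_pair_eq]⟩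
  have hghost : ∀ g : {v : V // G.IsLoopAt v},
      Relation.ReflTransGen (G.loopFree).adj (Sum.inl g.val) (Sum.inr g) := by
    rintro ⟨v, hv⟩
    obtain ⟨e, he⟩ := hv
    exact Relation.ReflTransGen.single ⟨e, ends_of_loop he ⟨e, he⟩⟩
  intro a b
  have ha : Relation.ReflTransGen (G.loopFree).adj a (Sum.inl (Sum.elim id Subtype.val a)) := by
    cases a with
    | inl v => exact .refl
    | inr g => exact rtg_symm hadj_symm (hghost g)
  have hb : Relation.ReflTransGen (G.loopFree).adj (Sum.inl (Sum.elim id Subtype.val b)) b := by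
    cases b with
    | inl v => exact .refl
    | inr g => exact hghost g
  exact (ha.trans (hinl _ _)).trans hb

lemma compPiece_eq_whole {V' E' : Type} {G' : Pseudograph V' E'}
    (h : ∀ u w, Relation.ReflTransGen G'.adj u w) (v : V') :
    G'.compPiece v = wholePiece := by
  refine Piece.ext' ?_ ?_
  · exact Set.eq_univ_of_forall fun u => h v u
  · exact Set.eq_univ_of_forall fun e u _ => h v u

/-- A ghost node in a tube of `G_m` that is not a singleton ghost tube comes with a loop edge. -/
lemma ghost_loop {K : Piece (V ⊕ {v : V // G.IsLoopAt v}) E}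
    (hK : (G.loopFree).IsTube K) (hg : ∀ v, K ≠ G.ghostPiece v)
    {v : V} {hv : G.IsLoopAt v} (hmem : Sum.inr ⟨v, hv⟩ ∈ K.verts) :
    ∃ e ∈ K.edges, G.ends e = s(v, v) := by
  obtain ⟨hcl, ⟨hne, hconn⟩, -, -⟩ := hK
  by_cases hex : ∃ u ∈ K.verts, u ≠ Sum.inr ⟨v, hv⟩
  · obtain ⟨u, hu, hne'⟩ := hex
    rcases (hconn _ hmem u hu).cases_head with heq | ⟨c, hstep, -⟩
    · exact absurd heq.symm hne'
    · obtain ⟨e, he, hends⟩ := hstep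
      rcases loopFree_ends_cases G e with ⟨x, hx, hex', hlf⟩ | ⟨hn, hlf⟩
      · rcases Sym2.eq_iff.mp (hlf.symm.trans hends) with ⟨h1, -⟩ | ⟨-, h2⟩
        · exact absurd h1 (by simp)
        · obtain rfl : x = v := congrArg (Sum.elim id Subtype.val) h2
          exact ⟨e, he, hex'⟩
      · obtain ⟨p, q, hp, -, -⟩ := map_inl_eq_decode (hlf.symm.trans hends)
        exact absurd hp (by simp)
  · push_neg at hex
    exfalso
    apply hg ⟨v, hv⟩
    have hverts : K.verts = {Sum.inr ⟨v, hv⟩} :=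
      Set.eq_singleton_iff_unique_mem.mpr ⟨hmem, hex⟩
    refine Piece.ext' hverts (Set.eq_empty_iff_forall_notMem.mpr fun e he => ?_)
    have hinl : ∃ p : V, Sum.inl p ∈ (G.loopFree).ends e := by
      rcases loopFree_ends_cases G e with ⟨x, hx, -, hlf⟩ | ⟨-, hlf⟩
      · exact ⟨x, hlf ▸ Sym2.mem_mk_left _ _⟩
      · obtain ⟨p, hp⟩ := sym2_exists_mem (G.ends e)
        exact ⟨p, hlf ▸ Sym2.mem_map.mpr ⟨p, hp, rfl⟩⟩
    obtain ⟨p, hp⟩ := hinl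
    have := hcl e he _ hp
    rw [hverts] at this
    exact absurd this (by simp)

lemma psi_eq_whole {K : Piece (V ⊕ {v : V // G.IsLoopAt v}) E}
    (hcl : ∀ e ∈ K.edges, ∀ x, x ∈ (G.loopFree).ends e → x ∈ K.verts)
    (h : G.psiPiece K = wholePiece) : K = wholePiece := by
  have hedges : K.edges = Set.univ := by
    have : (G.psiPiece K).edges = Set.univ := by rw [h]; rfl
    exact this
  have hverts : (G.psiPiece K).verts = Set.univ := by rw [h]; rfl
  refine Piece.ext' ?_ hedges
  refine Set.eq_univ_of_forall fun x => ?_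
  cases x with
  | inl v =>
    have : v ∈ (G.psiPiece K).verts := hverts ▸ Set.mem_univ v
    exact this
  | inr g =>
    obtain ⟨v, hv⟩ := g
    obtain ⟨e, he⟩ := hv
    exact hcl e (hedges ▸ Set.mem_univ e) _
      ((ends_of_loop he ⟨e, he⟩) ▸ Sym2.mem_mk_right _ _)

/-- `φ` of the inverse image recovers the tube. -/
lemma phi_psi {K : Piece (V ⊕ {v : V // G.IsLoopAt v}) E}
    (hK : (G.loopFree).IsTube K) (hg : ∀ v, K ≠ G.ghostPiece v) :
    G.phiPiece (G.psiPiece K) = K := by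
  refine Piece.ext' ?_ rfl
  ext x
  cases x with
  | inl v =>
    rw [phi_verts_inl]
    exact Iff.rfl
  | inr g =>
    obtain ⟨v, hv⟩ := g
    rw [phi_verts_inr]
    constructor
    · rintro ⟨e, he, hev⟩
      exact hK.1 e he _ ((ends_of_loop hev hv) ▸ Sym2.mem_mk_right _ _)
    · exact ghost_loop hK hg

/-- `φ` maps tubes to tubes. -/
lemma phi_tube {H : Piece V E} (hH : G.IsTube H) : (G.loopFree).IsTube (G.phiPiece H) := by
  obtain ⟨hcl, ⟨⟨v0, hv0⟩, hconn⟩, hnw, hsat⟩ := hH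
  refine ⟨?_, ⟨⟨Sum.inl v0, phi_verts_inl.mpr hv0⟩, ?_⟩, ?_, ?_⟩
  · -- edge closure
    intro e he x hx
    rcases loopFree_ends_cases G e with ⟨w, hw, hew, hlf⟩ | ⟨hn, hlf⟩
    · rw [hlf, Sym2.mem_iff] at hx
      rcases hx with rfl | rfl
      · exact phi_verts_inl.mpr (hcl e he w (hew ▸ Sym2.mem_mk_left w w))
      · exact phi_verts_inr.mpr ⟨e, he, hew⟩
    · rw [hlf] at hx
      obtain ⟨p, hp, rfl⟩ := Sym2.mem_map.mp hx
      exact phi_verts_inl.mpr (hcl e he p hp)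
  · -- connectivity
    have hreduce : ∀ x ∈ (G.phiPiece H).verts, ∃ v ∈ H.verts,
        Relation.ReflTransGen ((G.loopFree).adjIn (G.phiPiece H)) x (Sum.inl v) := by
      intro x hx
      cases x with
      | inl v => exact ⟨v, phi_verts_inl.mp hx, .refl⟩
      | inr g =>
        obtain ⟨v, hv⟩ := g
        obtain ⟨e, he, hev⟩ := phi_verts_inr.mp hx
        refine ⟨v, hcl e he v (hev ▸ Sym2.mem_mk_left v v), ?_⟩
        exact Relation.ReflTransGen.single
          ⟨e, he, by rw [ends_of_loop hev hv, Sym2.eq_swap]⟩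
    intro x hx y hy
    obtain ⟨a, ha, wa⟩ := hreduce x hx
    obtain ⟨b, hb, wb⟩ := hreduce y hy
    exact (wa.trans (lift_walk (hconn a ha b hb))).trans
      (rtg_symm (fun _ _ => adjIn_symm) wb)
  · -- not whole
    intro h
    exact hnw (phi_eq_whole h)
  · -- saturation
    intro x hx y hy hne ⟨e, hends⟩
    rcases loopFree_ends_cases G e with ⟨w, hw, hew, hlf⟩ | ⟨hn, hlf⟩
    · rcases Sym2.eq_iff.mp (hlf.symm.trans hends) with ⟨h1, h2⟩ | ⟨h1, h2⟩
      · subst h1; subst h2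
        obtain ⟨e', he', hev'⟩ := phi_verts_inr.mp hy
        exact ⟨e', he', by rw [ends_of_loop hev' hw]⟩
      · subst h1; subst h2
        obtain ⟨e', he', hev'⟩ := phi_verts_inr.mp hx
        exact ⟨e', he', by rw [ends_of_loop hev' hw, Sym2.eq_swap]⟩
    · obtain ⟨p, q, rfl, rfl, hz⟩ := map_inl_eq_decode (hlf.symm.trans hends)
      have hpq : p ≠ q := fun h => hne (by rw [h])
      obtain ⟨e', he', hev'⟩ := hsat p (phi_verts_inl.mp hx) q (phi_verts_inl.mp hy) hpq ⟨e, hz⟩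
      refine ⟨e', he', ?_⟩
      have hn' : ¬ ∃ w, G.ends e' = s(w, w) := by
        rintro ⟨w, hw⟩
        obtain ⟨h1, h2⟩ := sym2_diag_eq (hw.symm.trans hev')
        exact hpq (h1.symm.trans h2)
      rw [ends_of_nonloop hn', hev', Sym2.map_pair_eq]

/-- `ψ` maps non-ghost tubes of `G_m` to tubes of `G`. -/
lemma psi_tube {K : Piece (V ⊕ {v : V // G.IsLoopAt v}) E}
    (hK : (G.loopFree).IsTube K) (hg : ∀ v, K ≠ G.ghostPiece v) :
    G.IsTube (G.psiPiece K) := by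
  have hKt := hK
  obtain ⟨hcl, ⟨⟨x0, hx0⟩, hconn⟩, hnw, hsat⟩ := hKt
  refine ⟨?_, ⟨?_, ?_⟩, ?_, ?_⟩
  · -- edge closure
    intro e he v hv
    rcases loopFree_ends_cases G e with ⟨w, hw, hew, hlf⟩ | ⟨hn, hlf⟩
    · obtain rfl : v = w := by
        rw [hew, Sym2.mem_iff] at hv
        rcases hv with rfl | rfl <;> rfl
      exact hcl e he _ (hlf ▸ Sym2.mem_mk_left _ _)
    · exact hcl e he _ (hlf ▸ Sym2.mem_map.mpr ⟨v, hv, rfl⟩)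
  · -- nonempty
    cases x0 with
    | inl v => exact ⟨v, hx0⟩
    | inr g =>
      obtain ⟨v, hv⟩ := g
      obtain ⟨e, he, hev⟩ := ghost_loop hK hg hx0
      exact ⟨v, hcl e he _ ((ends_of_loop hev hv) ▸ Sym2.mem_mk_left _ _)⟩
  · -- connectivity
    intro u hu w hw
    have := proj_walk (G := G) (hconn (Sum.inl u) hu (Sum.inl w) hw)
    exact this
  · -- not whole
    intro h
    exact hnw (psi_eq_whole hcl h)
  · -- saturation
    intro u hu w hw hne ⟨e, hends⟩
    have hn : ¬ ∃ x, G.ends e = s(x, x) := by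
      rintro ⟨x, hx⟩
      obtain ⟨h1, h2⟩ := sym2_diag_eq (hx.symm.trans hends)
      exact hne (h1.symm.trans h2)
    have hlf : (G.loopFree).ends e = s(Sum.inl u, Sum.inl w) := by
      rw [ends_of_nonloop hn, hends, Sym2.map_pair_eq]
    obtain ⟨e', he', hev'⟩ := hsat (Sum.inl u) hu (Sum.inl w) hw
      (fun h => hne (Sum.inl_injective h)) ⟨e, hlf⟩
    rcases loopFree_ends_cases G e' with ⟨x, hx, hex, hlf'⟩ | ⟨hn', hlf'⟩
    · exfalso
      rcases Sym2.eq_iff.mp (hlf'.symm.trans hev') with ⟨-, h2⟩ | ⟨-, h2⟩ <;>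
        exact absurd h2 (by simp)
    · obtain ⟨p, q, hp, hq, hz⟩ := map_inl_eq_decode (hlf'.symm.trans hev')
      refine ⟨e', he', ?_⟩
      rw [hz, Sum.inl_injective hp.symm, Sum.inl_injective hq.symm]

lemma phi_verts_cases {H : Piece V E} {x : V ⊕ {v : V // G.IsLoopAt v}}
    (hx : x ∈ (G.phiPiece H).verts) :
    (∃ v ∈ H.verts, x = Sum.inl v) ∨
    (∃ v, ∃ hv : G.IsLoopAt v, x = Sum.inr ⟨v, hv⟩ ∧ v ∈ H.verts ∧
      ∃ e ∈ H.edges, G.ends e = s(v, v)) ∨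
    (∃ v, ∃ hv : G.IsLoopAt v, x = Sum.inr ⟨v, hv⟩ ∧ ∃ e ∈ H.edges, G.ends e = s(v, v)) := by
  rcases hx with ⟨v, hv, rfl⟩ | ⟨v, hv, rfl, he⟩
  · exact Or.inl ⟨v, hv, rfl⟩
  · exact Or.inr (Or.inr ⟨v, hv, rfl, he⟩)

/-- `φ` preserves compatibility of edge-closed pieces. -/
lemma phi_compat {H K : Piece V E}
    (hHc : ∀ e ∈ H.edges, ∀ v, v ∈ G.ends e → v ∈ H.verts)
    (hKc : ∀ e ∈ K.edges, ∀ v, v ∈ G.ends e → v ∈ K.verts)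
    (h : G.Compatible H K) :
    (G.loopFree).Compatible (G.phiPiece H) (G.phiPiece K) := by
  have hsub : ∀ {A B : Piece V E}, A.Sub B → (G.phiPiece A).Sub (G.phiPiece B) := by
    rintro A B ⟨hv, he⟩
    constructor
    · rintro x (⟨v, hvv, rfl⟩ | ⟨v, hv', rfl, e, hee, hev⟩)
      · exact Or.inl ⟨v, hv hvv, rfl⟩
      · exact Or.inr ⟨v, hv', rfl, e, he hee, hev⟩
    · exact he
  -- membership of a base vertex from a phi vertex
  have hbase : ∀ {A : Piece V E}, (∀ e ∈ A.edges, ∀ v, v ∈ G.ends e → v ∈ A.verts) →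
      ∀ {x}, x ∈ (G.phiPiece A).verts → Sum.elim id Subtype.val x ∈ A.verts := by
    rintro A hAc x (⟨v, hvv, rfl⟩ | ⟨v, hv', rfl, e, hee, hev⟩)
    · exact hvv
    · exact hAc e hee v (hev ▸ Sym2.mem_mk_left v v)
  rcases h with ⟨hs, hne⟩ | ⟨hs, hne⟩ | ⟨hdisj, hnoedge⟩
  · exact Or.inl ⟨hsub hs, fun h => hne (phi_injective h)⟩
  · exact Or.inr (Or.inl ⟨hsub hs, fun h => hne (phi_injective h)⟩)
  · refine Or.inr (Or.inr ⟨?_, ?_⟩)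
    · rw [Set.disjoint_left]
      intro x hxH hxK
      exact Set.disjoint_left.mp hdisj (hbase hHc hxH) (hbase hKc hxK)
    · rintro ⟨e, u, hu, w, hw, hends⟩
      rcases loopFree_ends_cases G e with ⟨x, hx, hex, hlf⟩ | ⟨hn, hlf⟩
      · have hxH' : Sum.elim id Subtype.val u ∈ H.verts := hbase hHc hu
        have hxK' : Sum.elim id Subtype.val w ∈ K.verts := hbase hKc hw
        have : Sum.elim id Subtype.val u = x ∧ Sum.elim id Subtype.val w = x := by
          rcases Sym2.eq_iff.mp (hlf.symm.trans hends) with ⟨h1, h2⟩ | ⟨h1, h2⟩ <;>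
            rw [← h1, ← h2] <;> exact ⟨rfl, rfl⟩
        have hx : Sum.elim id Subtype.val u ∈ K.verts := by
          rw [this.1.trans this.2.symm]; exact hxK'
        exact Set.disjoint_left.mp hdisj hxH' hx
      · obtain ⟨p, q, rfl, rfl, hz⟩ := map_inl_eq_decode (hlf.symm.trans hends)
        exact hnoedge ⟨e, p, phi_verts_inl.mp hu, q, phi_verts_inl.mp hw, hz⟩

/-- `ψ` preserves compatibility of non-ghost tubes. -/
lemma psi_compat {K K' : Piece (V ⊕ {v : V // G.IsLoopAt v}) E}
    (hK : (G.loopFree).IsTube K) (hg : ∀ v, K ≠ G.ghostPiece v)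
    (hK' : (G.loopFree).IsTube K') (hg' : ∀ v, K' ≠ G.ghostPiece v)
    (h : (G.loopFree).Compatible K K') :
    G.Compatible (G.psiPiece K) (G.psiPiece K') := by
  have hpsi_inj : G.psiPiece K = G.psiPiece K' → K = K' := by
    intro hpp
    rw [← phi_psi hK hg, ← phi_psi hK' hg', hpp]
  have hsub : ∀ {A B : Piece (V ⊕ {v : V // G.IsLoopAt v}) E}, A.Sub B →
      (G.psiPiece A).Sub (G.psiPiece B) := by
    rintro A B ⟨hv, he⟩
    exact ⟨fun v hv' => hv hv', he⟩
  rcases h with ⟨hs, hne⟩ | ⟨hs, hne⟩ | ⟨hdisj, hnoedge⟩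
  · exact Or.inl ⟨hsub hs, fun h => hne (hpsi_inj h)⟩
  · exact Or.inr (Or.inl ⟨hsub hs, fun h => hne (hpsi_inj h.symm).symm⟩)
  · refine Or.inr (Or.inr ⟨?_, ?_⟩)
    · rw [Set.disjoint_left]
      intro v hvK hvK'
      exact Set.disjoint_left.mp hdisj hvK hvK'
    · rintro ⟨e, u, hu, w, hw, hends⟩
      rcases loopFree_ends_cases G e with ⟨x, hx, hex, hlf⟩ | ⟨hn, hlf⟩
      · obtain ⟨h1, h2⟩ := sym2_diag_eq (hex.symm.trans hends)
        have hw' : Sum.inl u ∈ K'.verts := by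
          rw [show u = w from h1.symm.trans h2]; exact hw
        exact Set.disjoint_left.mp hdisj hu hw'
      · have hlf' : (G.loopFree).ends e = s(Sum.inl u, Sum.inl w) := by
          rw [hlf, hends, Sym2.map_pair_eq]
        exact hnoedge ⟨e, Sum.inl u, hu, Sum.inl w, hw, hlf'⟩

end LoopFreeAux
/-- `φ` is an injective poset map from tubings of `G` to tubings of `G_m`, whose image
consists exactly of the tubings of `G_m` containing no singleton ghost tube. -/
theorem loopFree_embedding (G : Pseudograph V E) (hG : G.ConnectedGraph)
    (hl : ∃ e v, G.ends e = s(v, v)) :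
    (∀ 𝒯, G.IsTubing 𝒯 → (G.loopFree).IsTubing (G.phiPiece '' 𝒯)) ∧
    (∀ 𝒯 𝒯', G.IsTubing 𝒯 → G.IsTubing 𝒯' → G.phiPiece '' 𝒯 = G.phiPiece '' 𝒯' → 𝒯 = 𝒯') ∧
    (∀ 𝒯 𝒯', G.IsTubing 𝒯 → G.IsTubing 𝒯' → 𝒯 ⊆ 𝒯' → G.phiPiece '' 𝒯 ⊆ G.phiPiece '' 𝒯') ∧
    (∀ U, (G.loopFree).IsTubing U →
      ((∃ 𝒯, G.IsTubing 𝒯 ∧ G.phiPiece '' 𝒯 = U) ↔ ∀ v, G.ghostPiece v ∉ U)) := by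
  obtain ⟨hV, hGconn⟩ := hG
  have hlfconn := loopFree_connected (G := G) ⟨hV, hGconn⟩
  refine ⟨?_, ?_, ?_, ?_⟩
  · -- φ sends tubings to tubings
    rintro 𝒯 ⟨h1, h2, h3⟩
    refine ⟨?_, ?_, ?_⟩
    · rintro _ ⟨H, hH, rfl⟩
      exact phi_tube (h1 H hH)
    · rintro _ ⟨H, hH, rfl⟩ _ ⟨K, hK, rfl⟩ hne
      have hHK : H ≠ K := fun h => hne (by rw [h])
      exact phi_compat (h1 H hH).1 (h1 K hK).1 (h2 H hH K hK hHK)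
    · intro hall
      obtain ⟨v0⟩ := hV
      have hmem := hall (Sum.inl v0)
      rw [compPiece_eq_whole hlfconn] at hmem
      obtain ⟨H, hH, hw⟩ := hmem
      exact (h1 H hH).2.2.1 (phi_eq_whole hw)
  · -- injectivity
    intro 𝒯 𝒯' _ _ h
    exact phi_injective.image_injective h
  · -- monotone
    intro 𝒯 𝒯' _ _ h
    exact Set.image_mono h
  · -- image characterization
    intro U hU
    constructor
    · rintro ⟨𝒯, hT, rfl⟩ v ⟨H, hH, hphi⟩
      obtain ⟨w, hw⟩ := (hT.1 H hH).2.1.1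
      have hmem : Sum.inl w ∈ (G.ghostPiece v).verts := by
        rw [← hphi]; exact phi_verts_inl.mpr hw
      simpa [ghostPiece] using hmem
    · intro hng
      have hgK : ∀ K ∈ U, ∀ v, K ≠ G.ghostPiece v := by
        intro K hK v h
        exact hng v (h ▸ hK)
      refine ⟨G.psiPiece '' U, ⟨?_, ?_, ?_⟩, ?_⟩
      · rintro _ ⟨K, hK, rfl⟩
        exact psi_tube (hU.1 K hK) (hgK K hK)
      · rintro _ ⟨K, hK, rfl⟩ _ ⟨K', hK', rfl⟩ hne
        have hKK' : K ≠ K' := fun h => hne (by rw [h])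
        exact psi_compat (hU.1 K hK) (hgK K hK) (hU.1 K' hK') (hgK K' hK')
          (hU.2.1 K hK K' hK' hKK')
      · intro hall
        obtain ⟨v0⟩ := hV
        have hmem := hall v0
        rw [compPiece_eq_whole hGconn] at hmem
        obtain ⟨K, hK, hw⟩ := hmem
        exact (hU.1 K hK).2.2.1 (psi_eq_whole (hU.1 K hK).1 hw)
      · ext K
        constructor
        · rintro ⟨_, ⟨K', hK', rfl⟩, rfl⟩
          rw [phi_psi (hU.1 K' hK') (hgK K' hK')]
          exact hK'
        · intro hK
          exact ⟨G.psiPiece K, ⟨K, hK, rfl⟩, phi_psi (hU.1 K hK) (hgK K hK)⟩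

end Pseudograph
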